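/- A finite family F of intervals on a line is redundant if and only if there exists an interval s such that every point of s belongs to at least two intervals of F|s. -/

import Mathlib

open scoped Classical

/-- A finite family of sets is irredundant if its members can be arranged in a
sequence such that each set contains a point not in any of the preceding sets. -/
def Irredundant (F : Finset (Set ℤ)) : Prop :=
  ∃ l : List (Set ℤ), l.Nodup ∧ l.toFinset = F ∧
    ∀ i : Fin l.length, ∃ x ∈ l.get i, ∀ j : Fin l.length, j < i → x ∉ l.get j

/-- An interval is a nonempty half-open integer interval `[a,b)`. -/
def IsItv (s : Set ℤ) : Prop := ∃ a b : ℤ, a < b ∧ s = Set.Ico a b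

/-- `F|s`: the members of `F` contained in `s`. -/
noncomputable def Res (F : Finset (Set ℤ)) (s : Set ℤ) : Finset (Set ℤ) :=
  F.filter (fun f => f ⊆ s)

/-- `N_x F`: the number of members of `F` containing `x`. -/
noncomputable def Nx (F : Finset (Set ℤ)) (x : ℤ) : ℕ :=
  (F.filter (fun f => x ∈ f)).card

lemma exists_lb (F : Finset (Set ℤ)) (hF : ∀ f ∈ F, IsItv f) :
    ∃ m : ℤ, ∀ x : ℤ, (∃ f ∈ F, x ∈ f) → m ≤ x := by
  classical
  induction F using Finset.induction_on with
  | empty => exact ⟨0, by simp⟩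
  | @insert g F hg ih =>
    obtain ⟨m, hm⟩ := ih (fun f hf => hF f (Finset.mem_insert_of_mem hf))
    obtain ⟨a, b, hab, hg'⟩ := hF g (Finset.mem_insert_self _ _)
    refine ⟨min a m, ?_⟩
    rintro x ⟨f, hf, hx⟩
    rcases Finset.mem_insert.1 hf with rfl | hf
    · rw [hg'] at hx; exact le_trans (min_le_left _ _) hx.1
    · exact le_trans (min_le_right _ _) (hm x ⟨f, hf, hx⟩)

lemma exists_ub (F : Finset (Set ℤ)) (hF : ∀ f ∈ F, IsItv f) :
    ∃ M : ℤ, ∀ x : ℤ, (∃ f ∈ F, x ∈ f) → x < M := by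
  classical
  induction F using Finset.induction_on with
  | empty => exact ⟨0, by simp⟩
  | @insert g F hg ih =>
    obtain ⟨M, hM⟩ := ih (fun f hf => hF f (Finset.mem_insert_of_mem hf))
    obtain ⟨a, b, hab, hg'⟩ := hF g (Finset.mem_insert_self _ _)
    refine ⟨max b M, ?_⟩
    rintro x ⟨f, hf, hx⟩
    rcases Finset.mem_insert.1 hf with rfl | hf
    · rw [hg'] at hx; exact lt_of_lt_of_le hx.2 (le_max_left _ _)
    · exact lt_of_lt_of_le (hM x ⟨f, hf, hx⟩) (le_max_right _ _)


lemma exists_gap_below (U : ℤ → Prop) (m a0 : ℤ) (hm : ∀ x, U x → m ≤ x) :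
    ∃ A : ℤ, A < a0 ∧ ¬ U A ∧ ∀ x : ℤ, A < x → x < a0 → U x := by
  classical
  have hex : ∃ k : ℕ, ¬ U (a0 - 1 - k) := by
    refine ⟨(a0 - m).toNat, fun h => ?_⟩
    have h1 : (a0 - m : ℤ) ≤ (a0 - m).toNat := Int.self_le_toNat _
    have := hm _ h
    omega
  obtain ⟨k, hspec, hmin⟩ : ∃ k : ℕ, ¬ U (a0 - 1 - k) ∧ ∀ j : ℕ, j < k → U (a0 - 1 - j) :=
    ⟨Nat.find hex, Nat.find_spec hex, fun j hj => not_not.1 (Nat.find_min hex hj)⟩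
  refine ⟨a0 - 1 - k, by omega, hspec, ?_⟩
  intro x hx1 hx2
  have hj := hmin (a0 - 1 - x).toNat (by omega)
  have : ((a0 - 1 - x).toNat : ℤ) = a0 - 1 - x := by omega
  rw [this] at hj
  simpa using hj

lemma exists_gap_above (U : ℤ → Prop) (M b0 : ℤ) (hM : ∀ x, U x → x < M) :
    ∃ B : ℤ, b0 ≤ B ∧ ¬ U B ∧ ∀ x : ℤ, b0 ≤ x → x < B → U x := by
  classical
  have hex : ∃ k : ℕ, ¬ U (b0 + k) := by
    refine ⟨(M - b0).toNat, fun h => ?_⟩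
    have h1 : (M - b0 : ℤ) ≤ (M - b0).toNat := Int.self_le_toNat _
    have := hM _ h
    omega
  obtain ⟨k, hspec, hmin⟩ : ∃ k : ℕ, ¬ U (b0 + k) ∧ ∀ j : ℕ, j < k → U (b0 + j) :=
    ⟨Nat.find hex, Nat.find_spec hex, fun j hj => not_not.1 (Nat.find_min hex hj)⟩
  refine ⟨b0 + k, by omega, hspec, ?_⟩
  intro x hx1 hx2
  have hj := hmin (x - b0).toNat (by omega)
  have : ((x - b0).toNat : ℤ) = x - b0 := by omega
  rw [this] at hj
  simpa using hj

/-- Key lemma: if every point of every member is also in some other member, then the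
"connected component" of a member in the union is a bad interval. -/
lemma exists_bad (F : Finset (Set ℤ)) (hF : ∀ f ∈ F, IsItv f) (hne : F.Nonempty)
    (hpriv : ∀ f ∈ F, ∀ x ∈ f, ∃ g ∈ F, g ≠ f ∧ x ∈ g) :
    ∃ s : Set ℤ, IsItv s ∧ ∀ x ∈ s, 2 ≤ Nx (Res F s) x := by
  classical
  obtain ⟨f0, hf0⟩ := hne
  obtain ⟨a0, b0, hab0, hf0'⟩ := hF f0 hf0
  obtain ⟨m, hm⟩ := exists_lb F hF
  obtain ⟨M, hM⟩ := exists_ub F hF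
  obtain ⟨A, hA2, hA3, hAfill⟩ := exists_gap_below (fun x => ∃ f ∈ F, x ∈ f) m a0 hm
  obtain ⟨B, hB1, hB3, hBfill⟩ := exists_gap_above (fun x => ∃ f ∈ F, x ∈ f) M b0 hM
  push_neg at hA3 hB3
  -- the component
  set s : Set ℤ := Set.Ico (A + 1) B with hsdef
  have hAB : A + 1 < B := by omega
  have hInU : ∀ x : ℤ, A + 1 ≤ x → x < B → ∃ f ∈ F, x ∈ f := by
    intro x hx1 hx2
    rcases lt_or_ge x a0 with h | h
    · exact hAfill x (by omega) h
    rcases lt_or_ge x b0 with h' | h'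
    · exact ⟨f0, hf0, by rw [hf0']; exact ⟨h, h'⟩⟩
    · exact hBfill x h' hx2
  have hcontain : ∀ f ∈ F, (∃ x, x ∈ f ∧ x ∈ s) → f ⊆ s := by
    rintro f hfF ⟨x, hxf, hxs⟩
    obtain ⟨c, d, hcd, rfl⟩ := hF f hfF
    obtain ⟨hxc, hxd⟩ := hxf
    obtain ⟨hxA, hxB⟩ := hxs
    have hc : A + 1 ≤ c := by
      by_contra h
      exact hA3 (Set.Ico c d) hfF ⟨by omega, by omega⟩
    have hd : d ≤ B := by
      by_contra h
      exact hB3 (Set.Ico c d) hfF ⟨by omega, by omega⟩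
    exact Set.Ico_subset_Ico hc hd
  refine ⟨s, ⟨A + 1, B, hAB, rfl⟩, ?_⟩
  intro x hxs
  obtain ⟨f, hfF, hxf⟩ := hInU x hxs.1 hxs.2
  have hfs : f ⊆ s := hcontain f hfF ⟨x, hxf, hxs⟩
  obtain ⟨g, hgF, hgf, hxg⟩ := hpriv f hfF x hxf
  have hgs : g ⊆ s := hcontain g hgF ⟨x, hxg, hxs⟩
  have hmemf : f ∈ (Res F s).filter (fun f => x ∈ f) := by
    simp [Res, Finset.mem_filter, hfF, hfs, hxf]
  have hmemg : g ∈ (Res F s).filter (fun f => x ∈ f) := by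
    simp [Res, Finset.mem_filter, hgF, hgs, hxg]
  exact Finset.one_lt_card.2 ⟨f, hmemf, g, hmemg, fun h => hgf h.symm⟩

lemma irred_of_no_bad : ∀ n : ℕ, ∀ F : Finset (Set ℤ), F.card ≤ n → (∀ f ∈ F, IsItv f) →
    (¬ ∃ s : Set ℤ, IsItv s ∧ ∀ x ∈ s, 2 ≤ Nx (Res F s) x) → Irredundant F := by
  intro n
  induction n with
  | zero =>
    intro F hcard _ _
    have : F = ∅ := Finset.card_eq_zero.1 (Nat.le_zero.1 hcard)
    subst this
    exact ⟨[], List.nodup_nil, by simp, fun i => Fin.elim0 i⟩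
  | succ n ih =>
    intro F hcard hF hnobad
    rcases F.eq_empty_or_nonempty with rfl | hne
    · exact ⟨[], List.nodup_nil, by simp, fun i => Fin.elim0 i⟩
    have hpriv' : ¬ ∀ f ∈ F, ∀ x ∈ f, ∃ g ∈ F, g ≠ f ∧ x ∈ g :=
      fun h => hnobad (exists_bad F hF hne h)
    push_neg at hpriv'
    obtain ⟨f, hfF, x, hxf, hx⟩ := hpriv'
    set F' := F.erase f with hF'def
    have hcard' : F'.card ≤ n := by
      rw [hF'def, Finset.card_erase_of_mem hfF]
      omega
    have hF'sub : F' ⊆ F := Finset.erase_subset f F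
    have hnobad' : ¬ ∃ s : Set ℤ, IsItv s ∧ ∀ x ∈ s, 2 ≤ Nx (Res F' s) x := by
      rintro ⟨s, hs, hbad⟩
      apply hnobad
      refine ⟨s, hs, fun y hy => le_trans (hbad y hy) ?_⟩
      exact Finset.card_le_card (Finset.filter_subset_filter _
        (Finset.filter_subset_filter _ hF'sub))
    obtain ⟨l, hnd, htf, hwit⟩ := ih F' hcard' (fun g hg => hF g (hF'sub hg)) hnobad'
    have hfl : f ∉ l := by
      intro h
      have : f ∈ F' := htf ▸ List.mem_toFinset.2 h
      exact (Finset.notMem_erase f F) this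
    refine ⟨l ++ [f], ?_, ?_, ?_⟩
    · rw [List.nodup_append]
      exact ⟨hnd, List.nodup_singleton f, by simpa using fun a (ha : a ∈ l) (h : a = f) => hfl (h ▸ ha)⟩
    · ext g
      simp only [List.toFinset_append, List.toFinset_cons, List.toFinset_nil,
        insert_empty_eq, Finset.mem_union, Finset.mem_singleton, htf, hF'def,
        Finset.mem_erase]
      by_cases hgf : g = f
      · simp [hgf, hfF]
      · simp [hgf]
    · intro i
      have hlen : (l ++ [f]).length = l.length + 1 := by simp
      by_cases hi : (i : ℕ) < l.length
      · obtain ⟨y, hy, hyj⟩ := hwit ⟨(i : ℕ), hi⟩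
        have hget : (l ++ [f]).get i = l.get ⟨(i : ℕ), hi⟩ := by
          simp [List.get_eq_getElem, List.getElem_append_left hi]
        refine ⟨y, by rwa [hget], ?_⟩
        intro j hj
        have hj' : (j : ℕ) < l.length := lt_trans hj hi
        have hgetj : (l ++ [f]).get j = l.get ⟨(j : ℕ), hj'⟩ := by
          simp [List.get_eq_getElem, List.getElem_append_left hj']
        rw [hgetj]
        exact hyj ⟨(j : ℕ), hj'⟩ hj
      · have hieq : (i : ℕ) = l.length := by
          have h2 := i.2
          simp only [List.length_append, List.length_singleton] at h2
          omega
        have hget : (l ++ [f]).get i = f := by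
          simp [List.get_eq_getElem, hieq]
        refine ⟨x, by rwa [hget], ?_⟩
        intro j hj
        have hj' : (j : ℕ) < l.length := by
          have : (j : ℕ) < (i : ℕ) := hj
          omega
        have hgetj : (l ++ [f]).get j = l.get ⟨(j : ℕ), hj'⟩ := by
          simp [List.get_eq_getElem, List.getElem_append_left hj']
        rw [hgetj]
        have hmem : l.get ⟨(j : ℕ), hj'⟩ ∈ F' := by
          rw [← htf]
          exact List.mem_toFinset.2 (l.get_mem _)
        have hne' : l.get ⟨(j : ℕ), hj'⟩ ≠ f := Finset.ne_of_mem_erase hmem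
        exact hx _ (hF'sub hmem) hne'

/-- A finite family of intervals is redundant iff there is an interval `s` such that
every point of `s` belongs to at least two intervals of `F|s`. -/
theorem redundant_iff_exists_bad_interval (F : Finset (Set ℤ))
    (hF : ∀ f ∈ F, IsItv f) :
    ¬ Irredundant F ↔ ∃ s : Set ℤ, IsItv s ∧ ∀ x ∈ s, 2 ≤ Nx (Res F s) x := by
  constructor
  · intro hnot
    by_contra hno
    exact hnot (irred_of_no_bad F.card F le_rfl hF hno)
  · rintro ⟨s, ⟨a, b, hab, rfl⟩, hbad⟩ ⟨l, hnd, htf, hwit⟩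
    -- find an element of Res F s, hence an index into l whose entry is ⊆ s
    have has : a ∈ Set.Ico a b := ⟨le_refl a, hab⟩
    have h2a := hbad a has
    have hfil : ((Res F (Set.Ico a b)).filter (fun f => a ∈ f)).Nonempty := by
      rw [← Finset.card_pos]; exact lt_of_lt_of_le (by norm_num) h2a
    obtain ⟨f0, hf0⟩ := hfil
    have hf0' : f0 ∈ F ∧ f0 ⊆ Set.Ico a b := by
      have := Finset.mem_filter.1 hf0
      have := Finset.mem_filter.1 this.1
      exact ⟨(Finset.mem_filter.1 (Finset.mem_filter.1 hf0).1).1,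
        (Finset.mem_filter.1 (Finset.mem_filter.1 hf0).1).2⟩
    -- indices whose entries are contained in s
    set I : Finset (Fin l.length) := Finset.univ.filter (fun i => l.get i ⊆ Set.Ico a b)
      with hIdef
    have hIne : I.Nonempty := by
      have : f0 ∈ l := List.mem_toFinset.1 (htf ▸ hf0'.1)
      obtain ⟨i, hi⟩ := List.mem_iff_get.1 this
      exact ⟨i, Finset.mem_filter.2 ⟨Finset.mem_univ _, hi ▸ hf0'.2⟩⟩
    set i := I.max' hIne with hidef
    have hiI : i ∈ I := I.max'_mem hIne
    have hisub : l.get i ⊆ Set.Ico a b := (Finset.mem_filter.1 hiI).2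
    obtain ⟨y, hy, hyj⟩ := hwit i
    have hys : y ∈ Set.Ico a b := hisub hy
    have h2 := hbad y hys
    have hmemi : l.get i ∈ (Res F (Set.Ico a b)).filter (fun f => y ∈ f) := by
      refine Finset.mem_filter.2 ⟨Finset.mem_filter.2 ⟨?_, hisub⟩, hy⟩
      exact htf ▸ List.mem_toFinset.2 (l.get_mem _)
    obtain ⟨g, hg, hgne⟩ := Finset.exists_mem_ne h2 (l.get i)
    have hg1 := Finset.mem_filter.1 hg
    have hg2 := Finset.mem_filter.1 hg1.1
    -- g ∈ F, g ⊆ s, y ∈ g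
    have hgl : g ∈ l := List.mem_toFinset.1 (htf ▸ hg2.1)
    obtain ⟨j, hj⟩ := List.mem_iff_get.1 hgl
    have hjI : j ∈ I := Finset.mem_filter.2 ⟨Finset.mem_univ _, hj ▸ hg2.2⟩
    have hji : j ≤ i := I.le_max' j hjI
    have hjne : j ≠ i := fun h => hgne (h ▸ hj).symm
    have hjlt : j < i := lt_of_le_of_ne hji hjne
    exact hyj j hjlt (hj ▸ hg1.2)
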